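/- Let α, β ≥ 1 be real numbers and c_f, c_g > 0. Suppose f, g : (0,∞) → ℝ are measurable and bounded, vanish identically on (1,∞), and satisfy the one-sided asymptotics f(x) ~ c_f (1−x)^{α−1} and g(x) ~ c_g (1−x)^{β−1} as x → 1⁻ (asymptotic equivalence, i.e. the ratio tends to 1). Then their Mellin convolution satisfies (f ∗ g)(x) ~ c_f c_g (Γ(α)Γ(β)/Γ(α+β)) (1−x)^{α+β−1} as x → 1⁻. -/

import Mathlib

open MeasureTheory Set Filter

lemma realBeta (α β : ℝ) (hα : 0 < α) (hβ : 0 < β) :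
    ∫ u in (0:ℝ)..1, u ^ (α-1) * (1-u) ^ (β-1)
      = Real.Gamma α * Real.Gamma β / Real.Gamma (α+β) := by
  have h := Complex.Gamma_mul_Gamma_eq_betaIntegral (s := (α:ℂ)) (t := (β:ℂ))
    (by simpa using hα) (by simpa using hβ)
  have hbeta : Complex.betaIntegral (α:ℂ) (β:ℂ)
      = ((∫ u in (0:ℝ)..1, u ^ (α-1) * (1-u) ^ (β-1) : ℝ) : ℂ) := by
    rw [Complex.betaIntegral, ← intervalIntegral.integral_ofReal]
    refine intervalIntegral.integral_congr fun x hx => ?_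
    rw [uIcc_of_le (by norm_num : (0:ℝ) ≤ 1)] at hx
    rw [show ((α:ℂ)-1) = ((α-1:ℝ):ℂ) by push_cast; ring,
      show ((β:ℂ)-1) = ((β-1:ℝ):ℂ) by push_cast; ring,
      ← Complex.ofReal_cpow hx.1,
      show (1 - (x:ℂ)) = ((1-x:ℝ):ℂ) by push_cast; ring,
      ← Complex.ofReal_cpow (by linarith [hx.2]), ← Complex.ofReal_mul]
  have hG : Real.Gamma (α+β) ≠ 0 := (Real.Gamma_pos_of_pos (by linarith)).ne'
  rw [Complex.Gamma_ofReal, Complex.Gamma_ofReal,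
    show ((α:ℂ)+(β:ℂ)) = ((α+β:ℝ):ℂ) by push_cast; ring, Complex.Gamma_ofReal,
    hbeta, ← Complex.ofReal_mul, ← Complex.ofReal_mul] at h
  have h' : Real.Gamma α * Real.Gamma β
      = Real.Gamma (α+β) * ∫ u in (0:ℝ)..1, u ^ (α-1) * (1-u) ^ (β-1) := by
    exact_mod_cast h
  field_simp
  linarith [h']

lemma betaShift (α β x : ℝ) (hx1 : x < 1) :
    ∫ t in Ioo x 1, (t-x)^(α-1) * (1-t)^(β-1)
      = (1-x)^(α+β-1) * ∫ u in (0:ℝ)..1, u^(α-1)*(1-u)^(β-1) := by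
  have h1x : (0:ℝ) < 1 - x := by linarith
  have key := intervalIntegral.integral_comp_mul_add
    (a := (0:ℝ)) (b := 1) (fun t => (t-x)^(α-1) * (1-t)^(β-1)) h1x.ne' x
  simp only [mul_zero, zero_add, mul_one] at key
  rw [show (1-x)+x = 1 by ring] at key
  have key2 : (∫ u in (0:ℝ)..1, ((1-x)*u + x - x)^(α-1) * (1 - ((1-x)*u + x))^(β-1))
      = (1-x)^(α+β-2) * ∫ u in (0:ℝ)..1, u^(α-1)*(1-u)^(β-1) := by
    rw [← intervalIntegral.integral_const_mul]
    refine intervalIntegral.integral_congr fun u hu => ?_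
    rw [uIcc_of_le (by norm_num : (0:ℝ) ≤ 1)] at hu
    have e1 : (1-x)*u + x - x = (1-x)*u := by ring
    have e2 : 1 - ((1-x)*u + x) = (1-x)*(1-u) := by ring
    rw [e1, e2, Real.mul_rpow h1x.le hu.1, Real.mul_rpow h1x.le (by linarith [hu.2]),
      show α + β - 2 = (α-1) + (β-1) by ring, Real.rpow_add h1x]
    ring
  rw [key2, smul_eq_mul] at key
  rw [← MeasureTheory.integral_Ioc_eq_integral_Ioo, ← intervalIntegral.integral_of_le hx1.le]
  rw [show α + β - 1 = 1 + (α+β-2) by ring, Real.rpow_add h1x, Real.rpow_one]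
  have := key.symm
  field_simp at this
  linarith [this]

/-- bounded measurable on finite-measure set is integrable -/
lemma intOnOfBdd {h : ℝ → ℝ} (hm : Measurable h) {s : Set ℝ} (hs : MeasurableSet s)
    (hμ : volume s < ⊤) {C : ℝ} (hb : ∀ t ∈ s, |h t| ≤ C) : IntegrableOn h s := by
  refine Integrable.mono' ((integrableOn_const_iff (C := C)).2 (Or.inr hμ)) hm.aestronglyMeasurable ?_
  rw [ae_restrict_iff' hs]
  filter_upwards with t ht using by simpa [Real.norm_eq_abs] using hb t ht

lemma sandw {v d δ : ℝ} (hd : 0 < d) (h : |v / d - 1| < δ) :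
    (1-δ)*d ≤ v ∧ v ≤ (1+δ)*d := by
  rw [abs_lt] at h
  have hv : v = v/d*d := (div_mul_cancel₀ v hd.ne').symm
  constructor <;> nlinarith [h.1, h.2]

set_option maxHeartbeats 1000000

/-- One-sided asymptotics at `1⁻` of a Mellin convolution: if `f, g` are
bounded measurable functions vanishing on `(1,∞)` with
`f(x) ~ c_f (1−x)^{α−1}` and `g(x) ~ c_g (1−x)^{β−1}` as `x → 1⁻`, then
`(f ∗ g)(x) ~ c_f c_g (Γ(α)Γ(β)/Γ(α+β)) (1−x)^{α+β−1}` as `x → 1⁻`. -/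
theorem stmt18
    (α β : ℝ) (hα : 1 ≤ α) (hβ : 1 ≤ β)
    (cf cg : ℝ) (hcf : 0 < cf) (hcg : 0 < cg)
    (f g : ℝ → ℝ) (hfm : Measurable f) (hgm : Measurable g)
    (hfb : ∃ C : ℝ, ∀ x, |f x| ≤ C) (hgb : ∃ C : ℝ, ∀ x, |g x| ≤ C)
    (hf0 : ∀ x : ℝ, 1 < x → f x = 0) (hg0 : ∀ x : ℝ, 1 < x → g x = 0)
    (hfasym : Tendsto (fun x : ℝ => f x / (cf * (1 - x) ^ (α - 1)))
      (nhdsWithin 1 (Iio 1)) (nhds 1))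
    (hgasym : Tendsto (fun x : ℝ => g x / (cg * (1 - x) ^ (β - 1)))
      (nhdsWithin 1 (Iio 1)) (nhds 1)) :
    Tendsto (fun x : ℝ => (∫ t in Ioi (0:ℝ), f (x / t) * g t / t) /
        (cf * cg * (Real.Gamma α * Real.Gamma β / Real.Gamma (α + β)) *
          (1 - x) ^ (α + β - 1)))
      (nhdsWithin 1 (Iio 1)) (nhds 1) := by
  obtain ⟨Cf, hCf⟩ := hfb
  obtain ⟨Cg, hCg⟩ := hgb
  have hCf0 : 0 ≤ Cf := le_trans (abs_nonneg _) (hCf 0)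
  have hCg0 : 0 ≤ Cg := le_trans (abs_nonneg _) (hCg 0)
  set B : ℝ := Real.Gamma α * Real.Gamma β / Real.Gamma (α+β) with hB
  have hBpos : 0 < B := div_pos
    (mul_pos (Real.Gamma_pos_of_pos (by linarith)) (Real.Gamma_pos_of_pos (by linarith)))
    (Real.Gamma_pos_of_pos (by linarith))
  rw [Metric.tendsto_nhds]
  intro ε hε
  set δ : ℝ := min (ε/8) 1 with hδdef
  have hδ0 : 0 < δ := lt_min (by linarith) one_pos
  have hδ1 : δ ≤ 1 := min_le_right _ _
  have hδε : 7*δ < ε := by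
    have : δ ≤ ε/8 := min_le_left _ _
    nlinarith
  obtain ⟨ηf, hηf0, Hf⟩ := Metric.mem_nhdsWithin_iff.1 ((Metric.tendsto_nhds.1 hfasym) δ hδ0)
  obtain ⟨ηg, hηg0, Hg⟩ := Metric.mem_nhdsWithin_iff.1 ((Metric.tendsto_nhds.1 hgasym) δ hδ0)
  set m : ℝ := min (min ηf ηg) 1 with hm
  have hm0 : 0 < m := lt_min (lt_min hηf0 hηg0) one_pos
  have hm1 : m ≤ 1 := min_le_right _ _
  have hmf : m ≤ ηf := (min_le_left _ _).trans (min_le_left _ _)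
  have hmg : m ≤ ηg := (min_le_left _ _).trans (min_le_right _ _)
  have h1 : ∀ᶠ x in nhdsWithin 1 (Iio 1), 1 - m < x :=
    eventually_nhdsWithin_of_eventually_nhds (eventually_gt_nhds (by linarith))
  have h4 : ∀ᶠ x in nhdsWithin 1 (Iio 1), x ^ (-α) < 1 + δ := by
    have hc : Tendsto (fun x : ℝ => x ^ (-α)) (nhdsWithin 1 (Iio 1)) (nhds 1) := by
      have := (Real.continuousAt_rpow_const 1 (-α) (Or.inl one_ne_zero)).tendsto
      rw [Real.one_rpow] at this
      exact this.mono_left nhdsWithin_le_nhds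
    exact hc.eventually_lt_const (by linarith)
  filter_upwards [h1, eventually_mem_nhdsWithin, h4] with x hx1m hx1 hxpow
  have hx1' : x < 1 := hx1
  have hx0 : 0 < x := by linarith
  have h1x : 0 < 1 - x := by linarith
  have hsm : MeasurableSet (Ioo x 1) := measurableSet_Ioo
  have hsfin : volume (Ioo x 1) < ⊤ := by rw [Real.volume_Ioo]; exact ENNReal.ofReal_lt_top
  have hhm : Measurable (fun t => f (x/t) * g t / t) :=
    ((hfm.comp (measurable_const.div measurable_id)).mul hgm).div measurable_id
  have hφm : Measurable (fun t : ℝ => (t-x)^(α-1) * (1-t)^(β-1)) := by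
    have c1 : Continuous (fun t : ℝ => (t-x)^(α-1)) :=
      (Real.continuous_rpow_const (by linarith)).comp (continuous_id.sub continuous_const)
    have c2 : Continuous (fun t : ℝ => (1-t)^(β-1)) :=
      (Real.continuous_rpow_const (by linarith)).comp (continuous_const.sub continuous_id)
    exact (c1.mul c2).measurable
  -- Step A: reduce the integral to Ioo x 1
  have hred : (∫ t in Ioi (0:ℝ), f (x/t) * g t / t) = ∫ t in Ioo x 1, f (x/t) * g t / t := by
    have hnull : volume ({x, 1} : Set ℝ) = 0 :=
      Set.Finite.measure_zero (Set.toFinite _) _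
    have hae : ∀ᵐ t : ℝ, t ∉ ({x, 1} : Set ℝ) := measure_eq_zero_iff_ae_notMem.1 hnull
    have : (∫ t in Ioi (0:ℝ), f (x/t) * g t / t)
        = ∫ t in Ioi (0:ℝ), (Ioo x 1).indicator (fun t => f (x/t) * g t / t) t := by
      refine setIntegral_congr_ae measurableSet_Ioi ?_
      filter_upwards [hae] with t htne htpos
      by_cases hts : t ∈ Ioo x 1
      · rw [indicator_of_mem hts]
      · rw [indicator_of_notMem hts]
        simp only [mem_Ioo, not_and, not_lt] at hts
        simp only [mem_insert_iff, mem_singleton_iff, not_or] at htne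
        rcases lt_or_ge t x with htx | htx
        · have : (1:ℝ) < x / t := (one_lt_div htpos).2 htx
          rw [hf0 _ this]; ring
        · have htx' : x < t := lt_of_le_of_ne htx (Ne.symm htne.1)
          have ht1 : 1 ≤ t := hts htx'
          have ht1' : 1 < t := lt_of_le_of_ne ht1 (Ne.symm htne.2)
          rw [hg0 _ ht1']; ring
    rw [this, setIntegral_indicator hsm,
      show Ioi (0:ℝ) ∩ Ioo x 1 = Ioo x 1 from
        inter_eq_self_of_subset_right fun t ht => hx0.trans ht.1]
  -- pointwise bounds
  have hpb : ∀ t ∈ Ioo x 1,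
      (1-δ)^2 * (cf*cg) * ((t-x)^(α-1)*(1-t)^(β-1)) ≤ f (x/t) * g t / t ∧
      f (x/t) * g t / t ≤ (1+δ)^2 * (cf*cg) * x^(-α) * ((t-x)^(α-1)*(1-t)^(β-1)) := by
    intro t ht
    obtain ⟨htx, ht1⟩ := ht
    have ht0 : 0 < t := hx0.trans htx
    have hy1 : x/t < 1 := (div_lt_one ht0).2 htx
    have hyx : x < x/t := by rw [lt_div_iff₀ ht0]; nlinarith
    have hdf : dist (x/t) 1 < ηf := by
      rw [Real.dist_eq, abs_lt]; constructor <;> [linarith; linarith]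
    have hdg : dist t 1 < ηg := by
      rw [Real.dist_eq, abs_lt]; constructor <;> [linarith; linarith]
    have hd : 0 < cf * (1 - x/t)^(α-1) :=
      mul_pos hcf (Real.rpow_pos_of_pos (by linarith) _)
    have he : 0 < cg * (1 - t)^(β-1) :=
      mul_pos hcg (Real.rpow_pos_of_pos (by linarith) _)
    have hfbds := sandw hd (by
      have := Hf ⟨Metric.mem_ball.2 hdf, hy1⟩
      rwa [Set.mem_setOf_eq, Real.dist_eq] at this)
    have hgbds := sandw he (by
      have := Hg ⟨Metric.mem_ball.2 hdg, ht1⟩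
      rwa [Set.mem_setOf_eq, Real.dist_eq] at this)
    set d := cf * (1 - x/t)^(α-1)
    set e := cg * (1 - t)^(β-1)
    have hfnn : 0 ≤ f (x/t) := le_trans (mul_nonneg (by linarith) hd.le) hfbds.1
    have hgnn : 0 ≤ g t := le_trans (mul_nonneg (by linarith) he.le) hgbds.1
    have hlowmul : ((1-δ)*d) * ((1-δ)*e) ≤ f (x/t) * g t :=
      mul_le_mul hfbds.1 hgbds.1 (mul_nonneg (by linarith) he.le) hfnn
    have hupmul : f (x/t) * g t ≤ ((1+δ)*d) * ((1+δ)*e) :=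
      mul_le_mul hfbds.2 hgbds.2 hgnn (mul_nonneg (by linarith) hd.le)
    have htα0 : 0 < t^α := Real.rpow_pos_of_pos ht0 _
    have htα1 : t^α ≤ 1 := Real.rpow_le_one ht0.le ht1.le (by linarith)
    have htαx : x^α ≤ t^α := Real.rpow_le_rpow hx0.le htx.le (by linarith)
    have hxα0 : 0 < x^α := Real.rpow_pos_of_pos hx0 _
    have hφ0 : 0 ≤ (t-x)^(α-1)*(1-t)^(β-1) :=
      mul_nonneg (Real.rpow_nonneg (by linarith) _) (Real.rpow_nonneg (by linarith) _)
    have hkey : d * e / t = cf*cg*((t-x)^(α-1)*(1-t)^(β-1)) / t^α := by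
      have h1' : 1 - x/t = (t-x)/t := by field_simp
      have h2' : t^α = t^(α-1)*t := by
        rw [show α = (α-1)+1 by ring, Real.rpow_add ht0, Real.rpow_one]; ring_nf
      have h3' : ((t-x)/t)^(α-1) = (t-x)^(α-1) / t^(α-1) :=
        Real.div_rpow (sub_nonneg.2 htx.le) ht0.le (α-1)
      have htα1' : (0:ℝ) < t^(α-1) := Real.rpow_pos_of_pos ht0 _
      rw [show d = cf * (1 - x/t)^(α-1) from rfl, h1', h3', h2']
      field_simp
      ring
    constructor
    · calc (1-δ)^2 * (cf*cg) * ((t-x)^(α-1)*(1-t)^(β-1))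
          ≤ (1-δ)^2 * (cf*cg) * ((t-x)^(α-1)*(1-t)^(β-1)) / t^α := by
            rw [le_div_iff₀ htα0]
            have hA0 : 0 ≤ (1-δ)^2 * (cf*cg) * ((t-x)^(α-1)*(1-t)^(β-1)) :=
              mul_nonneg (mul_nonneg (sq_nonneg _) (mul_pos hcf hcg).le) hφ0
            nlinarith
        _ = ((1-δ)*d) * ((1-δ)*e) / t := by
            rw [show ((1-δ)*d) * ((1-δ)*e) / t = (1-δ)^2 * (d*e/t) by ring, hkey]; ring
        _ ≤ f (x/t) * g t / t := (div_le_div_iff_of_pos_right ht0).2 hlowmul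
    · calc f (x/t) * g t / t
          ≤ ((1+δ)*d) * ((1+δ)*e) / t := (div_le_div_iff_of_pos_right ht0).2 hupmul
        _ = (1+δ)^2 * (cf*cg) * ((t-x)^(α-1)*(1-t)^(β-1)) / t^α := by
            rw [show ((1+δ)*d) * ((1+δ)*e) / t = (1+δ)^2 * (d*e/t) by ring, hkey]; ring
        _ ≤ (1+δ)^2 * (cf*cg) * ((t-x)^(α-1)*(1-t)^(β-1)) / x^α := by
            have hnum : 0 ≤ (1+δ)^2 * (cf*cg) * ((t-x)^(α-1)*(1-t)^(β-1)) :=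
              mul_nonneg (mul_nonneg (by positivity) (mul_pos hcf hcg).le) hφ0
            gcongr
        _ = (1+δ)^2 * (cf*cg) * x^(-α) * ((t-x)^(α-1)*(1-t)^(β-1)) := by
            rw [Real.rpow_neg hx0.le, div_eq_mul_inv]; ring
  -- integrability
  have hIφ : IntegrableOn (fun t : ℝ => (t-x)^(α-1)*(1-t)^(β-1)) (Ioo x 1) := by
    refine intOnOfBdd hφm hsm hsfin (C := 1) fun t ht => ?_
    have h1' : 0 ≤ (t-x)^(α-1) := Real.rpow_nonneg (by linarith [ht.1]) _
    have h2' : 0 ≤ (1-t)^(β-1) := Real.rpow_nonneg (by linarith [ht.2]) _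
    rw [abs_of_nonneg (mul_nonneg h1' h2')]
    have h3' : (t-x)^(α-1) ≤ 1 :=
      Real.rpow_le_one (by linarith [ht.1]) (by linarith [ht.1, ht.2]) (by linarith)
    have h4' : (1-t)^(β-1) ≤ 1 :=
      Real.rpow_le_one (by linarith [ht.2]) (by linarith [ht.1, ht.2]) (by linarith)
    nlinarith
  have hIh : IntegrableOn (fun t => f (x/t) * g t / t) (Ioo x 1) := by
    refine intOnOfBdd hhm hsm hsfin (C := Cf*Cg/x) fun t ht => ?_
    have ht0 : 0 < t := hx0.trans ht.1
    rw [abs_div, abs_mul, abs_of_pos ht0]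
    have : |f (x/t)| * |g t| ≤ Cf * Cg := mul_le_mul (hCf _) (hCg _) (abs_nonneg _) hCf0
    calc |f (x/t)| * |g t| / t ≤ Cf * Cg / t := by gcongr
      _ ≤ Cf * Cg / x := by gcongr; exact ht.1.le
  -- integrate the bounds
  have hlowI := setIntegral_mono_on (hIφ.const_mul ((1-δ)^2 * (cf*cg))) hIh hsm
    (fun t ht => (hpb t ht).1)
  have hupI := setIntegral_mono_on hIh (hIφ.const_mul ((1+δ)^2 * (cf*cg) * x^(-α))) hsm
    (fun t ht => (hpb t ht).2)
  rw [MeasureTheory.integral_const_mul] at hlowI hupI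
  have hφval : (∫ t in Ioo x 1, (t-x)^(α-1)*(1-t)^(β-1)) = (1-x)^(α+β-1) * B := by
    rw [betaShift α β x hx1', realBeta α β (by linarith) (by linarith)]
  rw [hφval] at hlowI hupI
  -- final numeric estimate
  have hD : 0 < cf * cg * B * (1-x)^(α+β-1) :=
    mul_pos (mul_pos (mul_pos hcf hcg) hBpos) (Real.rpow_pos_of_pos h1x _)
  set F := ∫ t in Ioo x 1, f (x/t) * g t / t with hF
  have hxα : 0 < x^(-α) := Real.rpow_pos_of_pos hx0 _
  have hDDv : 0 < (1-x)^(α+β-1) * B := mul_pos (Real.rpow_pos_of_pos h1x _) hBpos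
  have hrl : (1-δ)^2 * (cf*cg*B*(1-x)^(α+β-1)) ≤ F := by nlinarith [hlowI]
  have hru : F ≤ (1+δ)^3 * (cf*cg*B*(1-x)^(α+β-1)) := by
    calc F ≤ (1+δ)^2 * (cf*cg) * x^(-α) * ((1-x)^(α+β-1) * B) := hupI
      _ ≤ (1+δ)^2 * (cf*cg) * (1+δ) * ((1-x)^(α+β-1) * B) := by
          gcongr
      _ = (1+δ)^3 * (cf*cg*B*(1-x)^(α+β-1)) := by ring
  rw [hred, Real.dist_eq, abs_lt]
  have hrat1 : (1-δ)^2 ≤ F / (cf * cg * B * (1-x)^(α+β-1)) := (le_div_iff₀ hD).2 hrl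
  have hrat2 : F / (cf * cg * B * (1-x)^(α+β-1)) ≤ (1+δ)^3 := (div_le_iff₀ hD).2 hru
  constructor
  · nlinarith [hrat1, hδ0, hδ1, hδε, sq_nonneg δ]
  · nlinarith [hrat2, hδ0, hδ1, hδε, sq_nonneg δ, sq_nonneg (1+δ)]
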